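/- The set of pure Nash equilibria of the constrained rate allocation game equals the maximal face of the capacity region, i.e., a profile α ∈ 𝒞 is a pure Nash equilibrium if and only if Σ_{i=1}^N α_i = C_N. -/

import Mathlib

open scoped Classical

private lemma log_submod_aux (a b c d : ℝ) (hb : 0 < b) (hc : b ≤ c) (hd : b ≤ d)
    (hsum : a + b = c + d) :
    Real.log a + Real.log b ≤ Real.log c + Real.log d := by
  have hc0 : 0 < c := lt_of_lt_of_le hb hc
  have hd0 : 0 < d := lt_of_lt_of_le hb hd
  have ha : 0 < a := by nlinarith
  rw [← Real.log_mul (ne_of_gt ha) (ne_of_gt hb),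
    ← Real.log_mul (ne_of_gt hc0) (ne_of_gt hd0)]
  apply Real.log_le_log (by positivity)
  nlinarith [mul_nonneg (sub_nonneg.mpr hc) (sub_nonneg.mpr hd)]

private lemma tight_union (N : ℕ) (P h : Fin N → ℝ) (σ2 : ℝ)
    (hP : ∀ i, 0 < P i) (hh : ∀ i, 0 < h i) (hσ : 0 < σ2)
    (C : Finset (Fin N) → ℝ)
    (hC : ∀ Ω : Finset (Fin N), C Ω = Real.log (1 + (∑ i ∈ Ω, P i * h i) / σ2))
    (α : Fin N → ℝ)
    (hfeas : ∀ Ω : Finset (Fin N), ∑ i ∈ Ω, α i ≤ C Ω)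
    (Ω Ω' : Finset (Fin N))
    (h1 : ∑ i ∈ Ω, α i = C Ω) (h2 : ∑ i ∈ Ω', α i = C Ω') :
    ∑ i ∈ Ω ∪ Ω', α i = C (Ω ∪ Ω') := by
  set S : Finset (Fin N) → ℝ := fun t => σ2 + ∑ i ∈ t, P i * h i with hS
  have hterm : ∀ i : Fin N, 0 ≤ P i * h i := fun i => le_of_lt (mul_pos (hP i) (hh i))
  have hSpos : ∀ t : Finset (Fin N), 0 < S t := by
    intro t
    have : 0 ≤ ∑ i ∈ t, P i * h i := Finset.sum_nonneg fun i _ => hterm i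
    simp only [hS]; linarith
  have hCS : ∀ t : Finset (Fin N), C t = Real.log (S t) - Real.log σ2 := by
    intro t
    rw [hC t, ← Real.log_div (ne_of_gt (hSpos t)) (ne_of_gt hσ)]
    congr 1
    field_simp [hS]
    rfl
  -- submodularity
  have hmono : S (Ω ∩ Ω') ≤ S Ω := by
    simp only [hS]
    have := Finset.sum_le_sum_of_subset_of_nonneg (Finset.inter_subset_left (s₁ := Ω) (s₂ := Ω'))
      (fun i _ _ => hterm i)
    linarith
  have hmono' : S (Ω ∩ Ω') ≤ S Ω' := by
    simp only [hS]
    have := Finset.sum_le_sum_of_subset_of_nonneg (Finset.inter_subset_right (s₁ := Ω) (s₂ := Ω'))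
      (fun i _ _ => hterm i)
    linarith
  have hsum : S (Ω ∪ Ω') + S (Ω ∩ Ω') = S Ω + S Ω' := by
    simp only [hS]
    have := Finset.sum_union_inter (s₁ := Ω) (s₂ := Ω') (f := fun i => P i * h i)
    linarith
  have hsub : C (Ω ∪ Ω') + C (Ω ∩ Ω') ≤ C Ω + C Ω' := by
    rw [hCS, hCS, hCS, hCS]
    have := log_submod_aux (S (Ω ∪ Ω')) (S (Ω ∩ Ω')) (S Ω) (S Ω')
      (hSpos _) hmono hmono' hsum
    linarith
  have hsumα : ∑ i ∈ Ω ∪ Ω', α i + ∑ i ∈ Ω ∩ Ω', α i = ∑ i ∈ Ω, α i + ∑ i ∈ Ω', α i :=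
    Finset.sum_union_inter
  have hA := hfeas (Ω ∪ Ω')
  have hB := hfeas (Ω ∩ Ω')
  linarith

theorem pure_nash_iff_maximal_face
    (N : ℕ) (hN : 2 ≤ N)
    (P h : Fin N → ℝ) (σ2 : ℝ)
    (hP : ∀ i, 0 < P i) (hh : ∀ i, 0 < h i) (hσ : 0 < σ2)
    (g : Fin N → ℝ → ℝ)
    (hg : ∀ i, StrictMonoOn (g i) (Set.Ici 0))
    (hgpos : ∀ i x, 0 ≤ x → 0 < g i x)
    (C : Finset (Fin N) → ℝ)
    (hC : ∀ Ω : Finset (Fin N), C Ω = Real.log (1 + (∑ i ∈ Ω, P i * h i) / σ2))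
    (𝒞 : Set (Fin N → ℝ))
    (h𝒞 : ∀ α, α ∈ 𝒞 ↔ ((∀ i, 0 ≤ α i) ∧
      ∀ Ω : Finset (Fin N), Ω.Nonempty → ∑ i ∈ Ω, α i ≤ C Ω))
    (u : Fin N → (Fin N → ℝ) → ℝ)
    (hu : ∀ i α, u i α = if α ∈ 𝒞 then g i (α i) else 0)
    (α : Fin N → ℝ) (hα : α ∈ 𝒞) :
    (∀ i : Fin N, ∀ x : ℝ, 0 ≤ x → Function.update α i x ∈ 𝒞 →
        u i (Function.update α i x) ≤ u i α)
      ↔ ∑ i, α i = C Finset.univ := by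
  have hα0 : ∀ i, 0 ≤ α i := ((h𝒞 α).mp hα).1
  have hαC : ∀ Ω : Finset (Fin N), Ω.Nonempty → ∑ i ∈ Ω, α i ≤ C Ω := ((h𝒞 α).mp hα).2
  have hCempty : C ∅ = 0 := by rw [hC]; simp
  have hfeas : ∀ Ω : Finset (Fin N), ∑ i ∈ Ω, α i ≤ C Ω := by
    intro Ω
    rcases Ω.eq_empty_or_nonempty with rfl | hne
    · simp [hCempty]
    · exact hαC Ω hne
  haveI : Nonempty (Fin N) := ⟨⟨0, by omega⟩⟩
  -- sum of an update over a set containing i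
  have hupd : ∀ (i : Fin N) (x : ℝ) (s : Finset (Fin N)), i ∈ s →
      ∑ j ∈ s, Function.update α i x j = ∑ j ∈ s, α j + (x - α i) := by
    intro i x s hi
    rw [Finset.sum_update_of_mem hi]
    have := Finset.sum_eq_sum_sdiff_singleton_add hi α
    linarith
  constructor
  · intro hNE
    by_contra hne
    have hlt : ∑ i, α i < C Finset.univ :=
      lt_of_le_of_ne (hfeas Finset.univ) hne
    by_cases hfree : ∃ i : Fin N, ∀ Ω : Finset (Fin N), i ∈ Ω → ∑ j ∈ Ω, α j < C Ω
    · obtain ⟨i, hi⟩ := hfree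
      set F : Finset (Finset (Fin N)) :=
        Finset.univ.powerset.filter (fun Ω => i ∈ Ω) with hF
      have hFne : F.Nonempty := ⟨Finset.univ, by simp [hF]⟩
      set δ : ℝ := F.inf' hFne (fun Ω => C Ω - ∑ j ∈ Ω, α j) with hδ
      have hδpos : 0 < δ := by
        rw [hδ, Finset.lt_inf'_iff]
        intro Ω hΩ
        have hiΩ : i ∈ Ω := (Finset.mem_filter.mp hΩ).2
        have := hi Ω hiΩ
        linarith
      have hδle : ∀ Ω : Finset (Fin N), i ∈ Ω → δ ≤ C Ω - ∑ j ∈ Ω, α j := by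
        intro Ω hiΩ
        exact Finset.inf'_le _ (by simp [hF, hiΩ])
      set x : ℝ := α i + δ with hx
      have hx0 : 0 ≤ x := by have := hα0 i; linarith
      have hmem : Function.update α i x ∈ 𝒞 := by
        rw [h𝒞]
        constructor
        · intro j
          rcases eq_or_ne j i with rfl | hji
          · simpa using hx0
          · rw [Function.update_of_ne hji]; exact hα0 j
        · intro Ω hΩne
          by_cases hiΩ : i ∈ Ω
          · rw [hupd i x Ω hiΩ]
            have := hδle Ω hiΩ
            simp only [hx]
            linarith
          · have : ∑ j ∈ Ω, Function.update α i x j = ∑ j ∈ Ω, α j := by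
              apply Finset.sum_congr rfl
              intro j hj
              exact Function.update_of_ne (by rintro rfl; exact hiΩ hj) _ _
            rw [this]
            exact hαC Ω hΩne
      have := hNE i x hx0 hmem
      rw [hu, hu, if_pos hmem, if_pos hα, Function.update_self] at this
      have hlt' : g i (α i) < g i x :=
        (hg i) (Set.mem_Ici.mpr (hα0 i)) (Set.mem_Ici.mpr hx0) (by simp [hx]; linarith)
      linarith
    · push_neg at hfree
      choose f hf1 hf2 using hfree
      have htight : ∀ i, ∑ j ∈ f i, α j = C (f i) :=
        fun i => le_antisymm (hfeas (f i)) (hf2 i)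
      have hbi : ∀ s : Finset (Fin N),
          ∑ j ∈ s.biUnion f, α j = C (s.biUnion f) := by
        intro s
        induction s using Finset.induction_on with
        | empty => simp [hCempty]
        | @insert a s' hns ih =>
          rw [Finset.biUnion_insert]
          exact tight_union N P h σ2 hP hh hσ C hC α hfeas _ _ (htight a) ih
      have huniv : (Finset.univ : Finset (Fin N)).biUnion f = Finset.univ := by
        apply Finset.eq_univ_iff_forall.mpr
        intro i
        exact Finset.mem_biUnion.mpr ⟨i, Finset.mem_univ i, hf1 i⟩
      have := hbi Finset.univ
      rw [huniv] at this
      linarith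
  · intro hsum i x hx0 hmem
    rw [hu, hu, if_pos hmem, if_pos hα, Function.update_self]
    have hle : x ≤ α i := by
      have h1 : ∑ j, Function.update α i x j ≤ C Finset.univ :=
        ((h𝒞 _).mp hmem).2 Finset.univ Finset.univ_nonempty
      rw [hupd i x Finset.univ (Finset.mem_univ i)] at h1
      linarith [hsum]
    rcases eq_or_lt_of_le hle with rfl | hlt
    · exact le_refl _
    · exact le_of_lt ((hg i) (Set.mem_Ici.mpr hx0) (Set.mem_Ici.mpr (hα0 i)) hlt)
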